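/- The Paris–Harrington statement is true: for all k, e, c there exists n such that for every coloring f : [{0,...,n-1}]^e → c there is a subset Y of {0,...,n-1} with |Y| ≥ k, |Y| ≥ min Y, and Y homogeneous for f. -/

import Mathlib

/-- Infinite Ramsey theorem: every infinite subset of ℕ contains an infinite
subset homogeneous for a given finite coloring of `e`-element subsets. -/
theorem infinite_ramsey (e : ℕ) {c : ℕ} (f : Finset ℕ → Fin c) :
    ∀ S : Set ℕ, S.Infinite →
      ∃ H ⊆ S, H.Infinite ∧
        ∀ s t : Finset ℕ, ↑s ⊆ H → ↑t ⊆ H → s.card = e → t.card = e → f s = f t := by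
  induction e generalizing f with
  | zero =>
    intro S hS
    refine ⟨S, le_refl _, hS, fun s t _ _ hs ht => ?_⟩
    rw [Finset.card_eq_zero] at hs ht
    rw [hs, ht]
  | succ e ih =>
    intro S hS
    -- step: from an infinite set T, shrink to an infinite subset above sInf T
    -- on which the color of `insert (sInf T) ·` is constant
    have key : ∀ T : Set ℕ, T.Infinite →
        ∃ H : Set ℕ, H ⊆ T ∩ Set.Ioi (sInf T) ∧ H.Infinite ∧
          ∀ s t : Finset ℕ, ↑s ⊆ H → ↑t ⊆ H → s.card = e → t.card = e →
            f (insert (sInf T) s) = f (insert (sInf T) t) := by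
      intro T hT
      have hT' : (T ∩ Set.Ioi (sInf T)).Infinite := by
        have : T ∩ Set.Ioi (sInf T) = T \ Set.Iic (sInf T) := by
          ext x; simp [Set.mem_diff, Set.mem_Ioi, Set.mem_Iic,
            Nat.not_le, and_comm]

        rw [this]
        exact hT.diff (Set.finite_Iic _)
      obtain ⟨H, hH1, hH2, hH3⟩ := ih (fun s => f (insert (sInf T) s)) _ hT'
      exact ⟨H, hH1, hH2, hH3⟩
    -- iterate
    let chain : ℕ → {T : Set ℕ // T.Infinite} := fun n =>
      Nat.rec ⟨S, hS⟩ (fun _ p => ⟨(key p.1 p.2).choose, (key p.1 p.2).choose_spec.2.1⟩) n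
    set Sseq : ℕ → Set ℕ := fun i => (chain i).1 with hSseq
    set a : ℕ → ℕ := fun i => sInf (Sseq i) with ha
    have hinf : ∀ i, (Sseq i).Infinite := fun i => (chain i).2
    have hsub : ∀ i, Sseq (i + 1) ⊆ Sseq i ∩ Set.Ioi (a i) := fun i =>
      (key (Sseq i) (hinf i)).choose_spec.1
    have hhom : ∀ i, ∀ s t : Finset ℕ, ↑s ⊆ Sseq (i+1) → ↑t ⊆ Sseq (i+1) →
        s.card = e → t.card = e → f (insert (a i) s) = f (insert (a i) t) := fun i =>
      (key (Sseq i) (hinf i)).choose_spec.2.2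
    have hmem : ∀ i, a i ∈ Sseq i := fun i => Nat.sInf_mem (hinf i).nonempty
    have hmono : ∀ i j, i ≤ j → Sseq j ⊆ Sseq i := by
      intro i j hij
      induction j with
      | zero => simp_all
      | succ j ihj =>
        rcases Nat.lt_or_ge i (j+1) with h | h
        · exact ((hsub j).trans Set.inter_subset_left).trans (ihj (Nat.lt_succ_iff.mp h))
        · have : i = j + 1 := le_antisymm hij h
          subst this; exact le_refl _
    have hamono : StrictMono a := by
      apply strictMono_nat_of_lt_succ
      intro i
      exact ((hsub i) (hmem (i+1))).2
    -- colors
    have hwit : ∀ i, ∃ s : Finset ℕ, ↑s ⊆ Sseq (i+1) ∧ s.card = e := fun i =>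
      (hinf (i+1)).exists_subset_card_eq e
    set col : ℕ → Fin c := fun i => f (insert (a i) (hwit i).choose) with hcol
    have hcolspec : ∀ i, ∀ s : Finset ℕ, ↑s ⊆ Sseq (i+1) → s.card = e →
        f (insert (a i) s) = col i := fun i s h1 h2 =>
      hhom i s (hwit i).choose h1 (hwit i).choose_spec.1 h2 (hwit i).choose_spec.2
    obtain ⟨v, hv⟩ := Finite.exists_infinite_fiber col
    rw [Set.infinite_coe_iff] at hv
    refine ⟨a '' (col ⁻¹' {v}), ?_, hv.image (hamono.injective.injOn), ?_⟩
    · rintro x ⟨i, _, rfl⟩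
      exact hmono 0 i (Nat.zero_le i) (hmem i)
    · -- homogeneity
      have main : ∀ s : Finset ℕ, ↑s ⊆ a '' (col ⁻¹' {v}) → s.card = e + 1 → f s = v := by
        intro s hsH hcard
        have hne : s.Nonempty := Finset.card_pos.mp (by omega)
        set m := s.min' hne with hm
        have hms : m ∈ s := s.min'_mem hne
        obtain ⟨i, hi, hai⟩ := hsH hms
        have herase : ↑(s.erase m) ⊆ Sseq (i + 1) := by
          intro x hx
          rcases Finset.mem_erase.mp hx with ⟨hxm, hxs⟩
          obtain ⟨j, _, haj⟩ := hsH hxs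
          have hmx : m < x := lt_of_le_of_ne (s.min'_le x hxs) (Ne.symm hxm)
          have hij : i < j := hamono.lt_iff_lt.mp (by rw [hai, haj]; exact hmx)
          rw [← haj]
          exact hmono (i+1) j hij (hmem j)
        have hcard' : (s.erase m).card = e := by
          rw [Finset.card_erase_of_mem hms, hcard]; omega
        have := hcolspec i (s.erase m) herase hcard'
        rw [hai, Finset.insert_erase hms] at this
        rw [this]
        exact hi
      intro s t hs ht hcs hct
      rw [main s hs hcs, main t ht hct]

/-- `Y` is homogeneous for the coloring `f` on `e`-element subsets. -/
def Homog {c : ℕ} (f : Finset ℕ → Fin c) (e : ℕ) (Y : Finset ℕ) : Prop :=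
  ∀ s ⊆ Y, ∀ t ⊆ Y, s.card = e → t.card = e → f s = f t

/-- The Paris–Harrington statement: for all `k, e, c` there is `n` such that every
coloring of the `e`-element subsets of `{0,...,n-1}` into `c` colors has a
large (`min Y ≤ |Y|`) homogeneous subset of cardinality at least `k`. -/
theorem stmt1 (k e c : ℕ) :
    ∃ n : ℕ, ∀ f : Finset ℕ → Fin c,
      ∃ Y ⊆ Finset.range n, k ≤ Y.card ∧ Y.min ≤ (Y.card : WithBot ℕ) ∧ Homog f e Y := by
  by_contra hcon
  push_neg at hcon
  choose F hF using hcon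
  -- an ultrafilter extending the cofinite filter
  obtain ⟨U, hU⟩ := Ultrafilter.exists_le (Filter.cofinite : Filter ℕ)
  -- limit coloring
  have hpure : ∀ s : Finset ℕ, ∃ v : Fin c, U.map (fun n => F n s) = pure v := fun s =>
    Ultrafilter.eq_pure_of_finite _
  choose G hG using hpure
  have hGmem : ∀ s : Finset ℕ, {n | F n s = G s} ∈ U := by
    intro s
    have : {G s} ∈ U.map (fun n => F n s) := by rw [hG s]; exact rfl
    simpa [Ultrafilter.mem_map, Set.preimage, Set.mem_singleton_iff] using this
  -- apply infinite Ramsey to G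
  obtain ⟨H, -, hHinf, hHhom⟩ := infinite_ramsey e G Set.univ Set.infinite_univ
  -- build a large homogeneous finite set Y
  have hHne : H.Nonempty := hHinf.nonempty
  set m := sInf H with hm
  have hmH : m ∈ H := Nat.sInf_mem hHne
  obtain ⟨Y0, hY0H, hY0card⟩ := (hHinf.diff (Set.finite_Iic m)).exists_subset_card_eq (max k m)
  have hmY0 : m ∉ Y0 := fun h => (hY0H h).2 (Set.mem_Iic.mpr le_rfl)
  set Y : Finset ℕ := insert m Y0 with hY
  have hYcard : Y.card = max k m + 1 := by
    rw [hY, Finset.card_insert_of_notMem hmY0, hY0card]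
  have hYH : ↑Y ⊆ H := by
    intro x hx
    rcases Finset.mem_insert.mp hx with h | h
    · rw [h]; exact hmH
    · exact (hY0H h).1
  have hk : k ≤ Y.card := by rw [hYcard]; omega
  have hmcard : m ≤ Y.card := by rw [hYcard]; omega
  have hminY : Y.min ≤ (Y.card : WithBot ℕ) :=
    le_trans (Finset.min_le (Finset.mem_insert_self m Y0)) (WithTop.coe_le_coe.mpr hmcard)
  have hYhom : Homog G e Y := fun s hs t ht hcs hct =>
    hHhom s t ((Finset.coe_subset.mpr hs).trans hYH) ((Finset.coe_subset.mpr ht).trans hYH)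
      hcs hct
  -- find a single n where F n agrees with G on all subsets of Y and Y ⊆ range n
  set N : ℕ := (Y.sup id) + 1 with hN
  have hA : (⋂ s ∈ Y.powerset, {n | F n s = G s}) ∈ U := by
    rw [← Ultrafilter.mem_coe, Filter.biInter_finset_mem]
    intro s _
    exact hGmem s
  have hB : {n | N ≤ n} ∈ U := by
    apply hU
    rw [Filter.mem_cofinite]
    have : {n : ℕ | N ≤ n}ᶜ = Set.Iio N := by
      ext x; simp [Set.mem_Iio, Nat.not_le]
    rw [this]
    exact Set.finite_Iio N
  obtain ⟨n, hnA, hnB⟩ := Filter.nonempty_of_mem (Filter.inter_mem hA hB : _ ∈ (U : Filter ℕ))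
  have hYrange : Y ⊆ Finset.range n := by
    intro x hx
    rw [Finset.mem_range]
    have : x ≤ Y.sup id := Finset.le_sup (f := id) hx
    have hNn : N ≤ n := hnB
    omega
  refine hF n Y hYrange hk hminY ?_
  intro s hs t ht hcs hct
  have hFs : F n s = G s := Set.mem_iInter₂.mp hnA s (Finset.mem_powerset.mpr hs)
  have hFt : F n t = G t := Set.mem_iInter₂.mp hnA t (Finset.mem_powerset.mpr ht)
  rw [hFs, hFt]
  exact hYhom s hs t ht hcs hct
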